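/- For every n ∈ ω with n ≥ 1, every set x, and every injection f : 2n(n+1) → x, one can construct an injection g from xⁿ (functions from n into x) into S_{2n+1}(x) \ S_{2n}(x), the set of permutations of x moving exactly 2n+1 elements. Consequently, for all cardinals 𝔞 ≥ 2n(n+1), 𝔞ⁿ ≤ |S_{2n+1}(x)|. -/

import Mathlib

set_option linter.unusedSectionVars false

namespace PowersInjectAux

variable {x : Type*} [DecidableEq x]

/-! ### Picking fresh reserved elements -/

/-- Sorted list of indices in `[lo, lo+size)` whose `F`-value avoids `V`. -/
def availL (F : ℕ → x) (V : Finset x) (lo size : ℕ) : List ℕ :=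
  ((Finset.Ico lo (lo + size)).filter (fun a => F a ∉ V)).sort (· ≤ ·)

/-- The `i`-th available index. -/
def pickA (F : ℕ → x) (V : Finset x) (lo size i : ℕ) : ℕ :=
  (availL F V lo size).getD i 0

lemma pickA_mem {F : ℕ → x} {V : Finset x} {lo size i : ℕ}
    (h : i < (availL F V lo size).length) :
    (lo ≤ pickA F V lo size i ∧ pickA F V lo size i < lo + size) ∧
      F (pickA F V lo size i) ∉ V := by
  have hmem : pickA F V lo size i ∈ availL F V lo size := by
    rw [pickA, List.getD_eq_getElem _ _ h]
    exact List.getElem_mem h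
  rw [availL, Finset.mem_sort, Finset.mem_filter, Finset.mem_Ico] at hmem
  exact hmem

lemma pickA_inj {F : ℕ → x} {V : Finset x} {lo size i j : ℕ}
    (hi : i < (availL F V lo size).length) (hj : j < (availL F V lo size).length)
    (h : pickA F V lo size i = pickA F V lo size j) : i = j := by
  rw [pickA, pickA, List.getD_eq_getElem _ _ hi, List.getD_eq_getElem _ _ hj] at h
  exact (List.Nodup.getElem_inj_iff (Finset.sort_nodup _ _)).mp h

lemma availL_length {N : ℕ} {F : ℕ → x}
    (hF : ∀ a b, a < N → b < N → F a = F b → a = b)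
    (V : Finset x) {lo size : ℕ} (hlo : 0 < lo) (hhi : lo + size ≤ N) (hN : 0 < N) :
    size ≤ (availL F V lo size).length + (V.erase (F 0)).card := by
  have hsum := Finset.card_filter_add_card_filter_not
    (s := Finset.Ico lo (lo + size)) (p := fun a => F a ∉ V)
  have hlen : (availL F V lo size).length
      = ((Finset.Ico lo (lo + size)).filter (fun a => F a ∉ V)).card :=
    Finset.length_sort _
  have hbad : ((Finset.Ico lo (lo + size)).filter (fun a => ¬ F a ∉ V)).card
      ≤ (V.erase (F 0)).card := by
    apply Finset.card_le_card_of_injOn F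
    · intro a ha
      rw [Finset.mem_coe, Finset.mem_filter, Finset.mem_Ico, not_not] at ha
      refine Finset.mem_erase.2 ⟨?_, ha.2⟩
      intro hcontra
      have : a = 0 := hF a 0 (lt_of_lt_of_le ha.1.2 hhi) hN hcontra
      omega
    · intro a ha b hb hab
      simp only [Finset.coe_filter, Set.mem_setOf_eq, Finset.mem_Ico] at ha hb
      exact hF a b (lt_of_lt_of_le ha.1.2 hhi) (lt_of_lt_of_le hb.1.2 hhi) hab
  have hcard : (Finset.Ico lo (lo + size)).card = size := by
    rw [Nat.card_Ico]; omega
  omega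

/-! ### The encoding -/

/-- All values of the tuple (totalized as `T : ℕ → x`), as a finset. -/
def VT (T : ℕ → x) (n : ℕ) : Finset x := (Finset.range n).image T

/-- `dd T i` is the least index with the same `T`-value as `i`. -/
def dd (T : ℕ → x) (i : ℕ) : ℕ := Nat.find (⟨i, rfl⟩ : ∃ j, T j = T i)

lemma dd_le (T : ℕ → x) (i : ℕ) : dd T i ≤ i := Nat.find_le rfl

lemma dd_spec (T : ℕ → x) (i : ℕ) : T (dd T i) = T i :=
  Nat.find_spec (⟨i, rfl⟩ : ∃ j, T j = T i)

lemma dd_congr {T : ℕ → x} {i j : ℕ} (h : T i = T j) : dd T i = dd T j :=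
  le_antisymm (Nat.find_le ((dd_spec T j).trans h.symm))
    (Nat.find_le ((dd_spec T i).trans h))

lemma dd_idem (T : ℕ → x) (i : ℕ) : dd T (dd T i) = dd T i := dd_congr (dd_spec T i)

/-- The element at the value-slot of index `i` (a genuine value, or a filler). -/
def wS (F T : ℕ → x) (n : ℕ) (i : ℕ) : x :=
  if T i ≠ F 0 ∧ dd T i = i then T i else F (pickA F (VT T n) 1 (2 * n) i)

/-- The element at the tag-slot of index `i`. -/
def zS (F T : ℕ → x) (n : ℕ) (i : ℕ) : x :=
  if T i = F 0 then F (pickA F (VT T n) (2 * n + 1) (2 * n - 1) i)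
  else if dd T i = i then F (pickA F (VT T n) 1 (2 * n) i)
  else F (pickA F (VT T n) (4 * n + 2 * n * dd T i) (2 * n) i)

/-- The full cycle sequence: anchor, value slots, tag slots. -/
def uS (F T : ℕ → x) (n : ℕ) (k : ℕ) : x :=
  if k = 0 then F 0 else if k ≤ n then wS F T n (k - 1) else zS F T n (k - 1 - n)

lemma uS_zero (F T : ℕ → x) (n : ℕ) : uS F T n 0 = F 0 := by simp [uS]

lemma uS_w (F T : ℕ → x) {n i : ℕ} (hi : i < n) :
    uS F T n (i + 1) = wS F T n i := by
  rw [uS, if_neg (by omega), if_pos (by omega), Nat.add_sub_cancel]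

lemma uS_z (F T : ℕ → x) {n i : ℕ} (hi : i < n) :
    uS F T n (n + 1 + i) = zS F T n i := by
  rw [uS, if_neg (by omega), if_neg (by omega)]
  congr 1
  omega

section Main

variable {F T : ℕ → x} {n : ℕ}
  (hn : 0 < n)
  (hF : ∀ a b, a < 2 * n * (n + 1) → b < 2 * n * (n + 1) → F a = F b → a = b)

lemma VT_card : (VT T n).card ≤ n :=
  le_trans Finset.card_image_le (le_of_eq (Finset.card_range n))

lemma mem_VT {i : ℕ} (hi : i < n) : T i ∈ VT T n :=
  Finset.mem_image.2 ⟨i, Finset.mem_range.2 hi, rfl⟩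

lemma wS_eq_gen {i : ℕ} (h1 : T i ≠ F 0) (h2 : dd T i = i) :
    wS F T n i = T i := by rw [wS, if_pos ⟨h1, h2⟩]

lemma wS_eq_fill {i : ℕ} (h : ¬(T i ≠ F 0 ∧ dd T i = i)) :
    wS F T n i = F (pickA F (VT T n) 1 (2 * n) i) := by rw [wS, if_neg h]

lemma zS_eq_E {i : ℕ} (h : T i = F 0) :
    zS F T n i = F (pickA F (VT T n) (2 * n + 1) (2 * n - 1) i) := by rw [zS, if_pos h]

lemma zS_eq_G {i : ℕ} (h1 : T i ≠ F 0) (h2 : dd T i = i) :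
    zS F T n i = F (pickA F (VT T n) 1 (2 * n) i) := by
  rw [zS, if_neg h1, if_pos h2]

lemma zS_eq_D {i : ℕ} (h1 : T i ≠ F 0) (h2 : dd T i ≠ i) :
    zS F T n i = F (pickA F (VT T n) (4 * n + 2 * n * dd T i) (2 * n) i) := by
  rw [zS, if_neg h1, if_neg h2]

lemma slot_cases {i : ℕ} (hi : i < n) :
    T i = F 0 ∨ (T i ≠ F 0 ∧ dd T i = i) ∨
      (T i ≠ F 0 ∧ dd T i ≠ i ∧ dd T i + 1 < n) := by
  by_cases e : T i = F 0
  · exact Or.inl e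
  by_cases d : dd T i = i
  · exact Or.inr (Or.inl ⟨e, d⟩)
  · have := dd_le T i
    exact Or.inr (Or.inr ⟨e, d, by omega⟩)

include hn hF

lemma lenG : n ≤ (availL F (VT T n) 1 (2 * n)).length := by
  have h1 : 1 + 2 * n ≤ 2 * n * (n + 1) := by nlinarith
  have h2 : 0 < 2 * n * (n + 1) := by nlinarith
  have := availL_length hF (VT T n) one_pos h1 h2
  have hc : ((VT T n).erase (F 0)).card ≤ n := le_trans Finset.card_erase_le VT_card
  omega

lemma lenE (he : F 0 ∈ VT T n) :
    n ≤ (availL F (VT T n) (2 * n + 1) (2 * n - 1)).length := by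
  have h4 : 4 * n ≤ 2 * n * (n + 1) := by nlinarith
  have h1 : (2 * n + 1) + (2 * n - 1) ≤ 2 * n * (n + 1) := by omega
  have h2 : 0 < 2 * n * (n + 1) := by nlinarith
  have := availL_length hF (VT T n) (by omega) h1 h2
  have hc : ((VT T n).erase (F 0)).card = (VT T n).card - 1 := Finset.card_erase_of_mem he
  have hc2 : (VT T n).card ≤ n := VT_card
  omega

lemma lenD {q : ℕ} (hq : q + 1 < n) :
    n ≤ (availL F (VT T n) (4 * n + 2 * n * q) (2 * n)).length := by
  have h1 : (4 * n + 2 * n * q) + 2 * n ≤ 2 * n * (n + 1) := by nlinarith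
  have h2 : 0 < 2 * n * (n + 1) := by nlinarith
  have := availL_length hF (VT T n) (by omega) h1 h2
  have hc : ((VT T n).erase (F 0)).card ≤ n := le_trans Finset.card_erase_le VT_card
  omega

/-- Bounds for the G-block pick. -/
lemma memG {i : ℕ} (hi : i < n) :
    (1 ≤ pickA F (VT T n) 1 (2 * n) i ∧ pickA F (VT T n) 1 (2 * n) i < 1 + 2 * n) ∧
      F (pickA F (VT T n) 1 (2 * n) i) ∉ VT T n :=
  pickA_mem (lt_of_lt_of_le hi (lenG hn hF))

lemma memE {i : ℕ} (hi : i < n) (he : F 0 ∈ VT T n) :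
    (2 * n + 1 ≤ pickA F (VT T n) (2 * n + 1) (2 * n - 1) i ∧
      pickA F (VT T n) (2 * n + 1) (2 * n - 1) i < (2 * n + 1) + (2 * n - 1)) ∧
      F (pickA F (VT T n) (2 * n + 1) (2 * n - 1) i) ∉ VT T n :=
  pickA_mem (lt_of_lt_of_le hi (lenE hn hF he))

lemma memD {i q : ℕ} (hi : i < n) (hq : q + 1 < n) :
    (4 * n + 2 * n * q ≤ pickA F (VT T n) (4 * n + 2 * n * q) (2 * n) i ∧
      pickA F (VT T n) (4 * n + 2 * n * q) (2 * n) i < (4 * n + 2 * n * q) + 2 * n) ∧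
      F (pickA F (VT T n) (4 * n + 2 * n * q) (2 * n) i) ∉ VT T n :=
  pickA_mem (lt_of_lt_of_le hi (lenD hn hF hq))

lemma arithN : 0 < 2 * n * (n + 1) := by nlinarith

lemma arithG' : 1 + 2 * n ≤ 2 * n * (n + 1) := by nlinarith

lemma arithE' : 4 * n ≤ 2 * n * (n + 1) := by nlinarith

lemma arithD' {q : ℕ} (hq : q + 1 < n) : (4 * n + 2 * n * q) + 2 * n ≤ 2 * n * (n + 1) := by
  nlinarith

lemma wS_ne_anchor {i : ℕ} (hi : i < n) : wS F T n i ≠ F 0 := by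
  by_cases hg : T i ≠ F 0 ∧ dd T i = i
  · rw [wS_eq_gen hg.1 hg.2]; exact hg.1
  · rw [wS_eq_fill hg]
    intro hc
    obtain ⟨⟨hb1, hb2⟩, -⟩ := memG (T := T) hn hF hi
    have := hF _ 0 (lt_of_lt_of_le hb2 (arithG' hn hF)) (arithN hn hF) hc
    omega

lemma zS_not_mem {i : ℕ} (hi : i < n) : zS F T n i ∉ VT T n := by
  rcases slot_cases (T := T) hi with hE | ⟨h1, h2⟩ | ⟨h1, h2, h3⟩
  · rw [zS_eq_E hE]
    have he : F 0 ∈ VT T n := by rw [← hE]; exact mem_VT hi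
    exact (memE hn hF hi he).2
  · rw [zS_eq_G h1 h2]; exact (memG hn hF hi).2
  · rw [zS_eq_D h1 h2]; exact (memD hn hF hi h3).2

lemma zS_ne_anchor {i : ℕ} (hi : i < n) : zS F T n i ≠ F 0 := by
  rcases slot_cases (T := T) hi with hE | ⟨h1, h2⟩ | ⟨h1, h2, h3⟩ <;> intro hc
  · rw [zS_eq_E hE] at hc
    have he : F 0 ∈ VT T n := by rw [← hE]; exact mem_VT hi
    obtain ⟨⟨hb1, hb2⟩, -⟩ := memE (T := T) hn hF hi he
    have h4 : 4 * n ≤ 2 * n * (n + 1) := arithE' hn hF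
    have := hF _ 0 (by omega) (arithN hn hF) hc
    omega
  · rw [zS_eq_G h1 h2] at hc
    obtain ⟨⟨hb1, hb2⟩, -⟩ := memG (T := T) hn hF hi
    have := hF _ 0 (lt_of_lt_of_le hb2 (arithG' hn hF)) (arithN hn hF) hc
    omega
  · rw [zS_eq_D h1 h2] at hc
    obtain ⟨⟨hb1, hb2⟩, -⟩ := memD (T := T) hn hF hi h3
    have := hF _ 0 (lt_of_lt_of_le hb2 (arithD' hn hF h3)) (arithN hn hF) hc
    omega

lemma wS_inj {i j : ℕ} (hi : i < n) (hj : j < n)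
    (h : wS F T n i = wS F T n j) : i = j := by
  by_cases hgi : T i ≠ F 0 ∧ dd T i = i <;> by_cases hgj : T j ≠ F 0 ∧ dd T j = j
  · rw [wS_eq_gen hgi.1 hgi.2, wS_eq_gen hgj.1 hgj.2] at h
    have := dd_congr h
    rw [hgi.2, hgj.2] at this
    exact this
  · rw [wS_eq_gen hgi.1 hgi.2, wS_eq_fill hgj] at h
    have hm := mem_VT (T := T) hi
    rw [h] at hm
    exact absurd hm (memG hn hF hj).2
  · rw [wS_eq_fill hgi, wS_eq_gen hgj.1 hgj.2] at h
    have hm := mem_VT (T := T) hj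
    rw [← h] at hm
    exact absurd hm (memG hn hF hi).2
  · rw [wS_eq_fill hgi, wS_eq_fill hgj] at h
    have hb := arithG' hn hF
    have e := hF _ _ (lt_of_lt_of_le (memG hn hF hi).1.2 hb)
      (lt_of_lt_of_le (memG hn hF hj).1.2 hb) h
    exact pickA_inj (lt_of_lt_of_le hi (lenG hn hF)) (lt_of_lt_of_le hj (lenG hn hF)) e

lemma wS_ne_zS {i j : ℕ} (hi : i < n) (hj : j < n) : wS F T n i ≠ zS F T n j := by
  by_cases hgi : T i ≠ F 0 ∧ dd T i = i
  · rw [wS_eq_gen hgi.1 hgi.2]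
    intro hc
    have hm := mem_VT (T := T) hi
    rw [hc] at hm
    exact zS_not_mem hn hF hj hm
  · rw [wS_eq_fill hgi]
    rcases slot_cases (T := T) hj with hE | ⟨h1, h2⟩ | ⟨h1, h2, h3⟩ <;> intro hc
    · rw [zS_eq_E hE] at hc
      have he : F 0 ∈ VT T n := by rw [← hE]; exact mem_VT hj
      obtain ⟨⟨ga, gb⟩, -⟩ := memG (T := T) hn hF hi
      obtain ⟨⟨ea, eb⟩, -⟩ := memE (T := T) hn hF hj he
      have h4 : 4 * n ≤ 2 * n * (n + 1) := arithE' hn hF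
      have := hF _ _ (by omega) (by omega) hc
      omega
    · rw [zS_eq_G h1 h2] at hc
      have hb := arithG' hn hF
      have e := hF _ _ (lt_of_lt_of_le (memG hn hF hi).1.2 hb)
        (lt_of_lt_of_le (memG hn hF hj).1.2 hb) hc
      have hij : i = j :=
        pickA_inj (lt_of_lt_of_le hi (lenG hn hF)) (lt_of_lt_of_le hj (lenG hn hF)) e
      subst hij
      exact hgi ⟨h1, h2⟩
    · rw [zS_eq_D h1 h2] at hc
      obtain ⟨⟨ga, gb⟩, -⟩ := memG (T := T) hn hF hi
      obtain ⟨⟨da, db⟩, -⟩ := memD (T := T) hn hF hj h3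
      have hda : 4 * n ≤ pickA F (VT T n) (4 * n + 2 * n * dd T j) (2 * n) j :=
        le_trans (Nat.le_add_right _ _) da
      have := hF _ _ (lt_of_lt_of_le gb (arithG' hn hF))
        (lt_of_lt_of_le db (arithD' hn hF h3)) hc
      omega

lemma zS_inj {i j : ℕ} (hi : i < n) (hj : j < n)
    (h : zS F T n i = zS F T n j) : i = j := by
  have h4 : 4 * n ≤ 2 * n * (n + 1) := arithE' hn hF
  rcases slot_cases (T := T) hi with hEi | ⟨g1, g2⟩ | ⟨d1, d2, d3⟩ <;>
    rcases slot_cases (T := T) hj with hEj | ⟨g1', g2'⟩ | ⟨d1', d2', d3'⟩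
  · -- E E
    rw [zS_eq_E hEi, zS_eq_E hEj] at h
    have he : F 0 ∈ VT T n := by rw [← hEi]; exact mem_VT hi
    obtain ⟨⟨ea, eb⟩, -⟩ := memE (T := T) hn hF hi he
    obtain ⟨⟨ea', eb'⟩, -⟩ := memE (T := T) hn hF hj he
    have e := hF _ _ (by omega) (by omega) h
    exact pickA_inj (lt_of_lt_of_le hi (lenE hn hF he)) (lt_of_lt_of_le hj (lenE hn hF he)) e
  · -- E G
    rw [zS_eq_E hEi, zS_eq_G g1' g2'] at h
    have he : F 0 ∈ VT T n := by rw [← hEi]; exact mem_VT hi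
    obtain ⟨⟨ea, eb⟩, -⟩ := memE (T := T) hn hF hi he
    obtain ⟨⟨ga, gb⟩, -⟩ := memG (T := T) hn hF hj
    have := hF _ _ (by omega) (lt_of_lt_of_le gb (arithG' hn hF)) h
    omega
  · -- E D
    rw [zS_eq_E hEi, zS_eq_D d1' d2'] at h
    have he : F 0 ∈ VT T n := by rw [← hEi]; exact mem_VT hi
    obtain ⟨⟨ea, eb⟩, -⟩ := memE (T := T) hn hF hi he
    obtain ⟨⟨da, db⟩, -⟩ := memD (T := T) hn hF hj d3'
    have hda : 4 * n ≤ pickA F (VT T n) (4 * n + 2 * n * dd T j) (2 * n) j :=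
      le_trans (Nat.le_add_right _ _) da
    have := hF _ _ (by omega) (lt_of_lt_of_le db (arithD' hn hF d3')) h
    omega
  · -- G E
    rw [zS_eq_G g1 g2, zS_eq_E hEj] at h
    have he : F 0 ∈ VT T n := by rw [← hEj]; exact mem_VT hj
    obtain ⟨⟨ea, eb⟩, -⟩ := memE (T := T) hn hF hj he
    obtain ⟨⟨ga, gb⟩, -⟩ := memG (T := T) hn hF hi
    have := hF _ _ (lt_of_lt_of_le gb (arithG' hn hF)) (by omega) h
    omega
  · -- G G
    rw [zS_eq_G g1 g2, zS_eq_G g1' g2'] at h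
    have hb := arithG' hn hF
    have e := hF _ _ (lt_of_lt_of_le (memG hn hF hi).1.2 hb)
      (lt_of_lt_of_le (memG hn hF hj).1.2 hb) h
    exact pickA_inj (lt_of_lt_of_le hi (lenG hn hF)) (lt_of_lt_of_le hj (lenG hn hF)) e
  · -- G D
    rw [zS_eq_G g1 g2, zS_eq_D d1' d2'] at h
    obtain ⟨⟨ga, gb⟩, -⟩ := memG (T := T) hn hF hi
    obtain ⟨⟨da, db⟩, -⟩ := memD (T := T) hn hF hj d3'
    have hda : 4 * n ≤ pickA F (VT T n) (4 * n + 2 * n * dd T j) (2 * n) j :=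
      le_trans (Nat.le_add_right _ _) da
    have := hF _ _ (lt_of_lt_of_le gb (arithG' hn hF))
      (lt_of_lt_of_le db (arithD' hn hF d3')) h
    omega
  · -- D E
    rw [zS_eq_D d1 d2, zS_eq_E hEj] at h
    have he : F 0 ∈ VT T n := by rw [← hEj]; exact mem_VT hj
    obtain ⟨⟨ea, eb⟩, -⟩ := memE (T := T) hn hF hj he
    obtain ⟨⟨da, db⟩, -⟩ := memD (T := T) hn hF hi d3
    have hda : 4 * n ≤ pickA F (VT T n) (4 * n + 2 * n * dd T i) (2 * n) i :=
      le_trans (Nat.le_add_right _ _) da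
    have := hF _ _ (lt_of_lt_of_le db (arithD' hn hF d3)) (by omega) h
    omega
  · -- D G
    rw [zS_eq_D d1 d2, zS_eq_G g1' g2'] at h
    obtain ⟨⟨ga, gb⟩, -⟩ := memG (T := T) hn hF hj
    obtain ⟨⟨da, db⟩, -⟩ := memD (T := T) hn hF hi d3
    have hda : 4 * n ≤ pickA F (VT T n) (4 * n + 2 * n * dd T i) (2 * n) i :=
      le_trans (Nat.le_add_right _ _) da
    have := hF _ _ (lt_of_lt_of_le db (arithD' hn hF d3))
      (lt_of_lt_of_le gb (arithG' hn hF)) h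
    omega
  · -- D D
    rw [zS_eq_D d1 d2, zS_eq_D d1' d2'] at h
    obtain ⟨⟨da, db⟩, -⟩ := memD (T := T) hn hF hi d3
    obtain ⟨⟨da', db'⟩, -⟩ := memD (T := T) hn hF hj d3'
    have e := hF _ _ (lt_of_lt_of_le db (arithD' hn hF d3))
      (lt_of_lt_of_le db' (arithD' hn hF d3')) h
    have hq : dd T i = dd T j := by
      rw [e] at da db
      have hm1 : 2 * n * dd T i < 2 * n * (dd T j + 1) := by
        rw [Nat.mul_succ]; omega
      have hm2 : 2 * n * dd T j < 2 * n * (dd T i + 1) := by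
        rw [Nat.mul_succ]; omega
      have l1 := Nat.lt_of_mul_lt_mul_left hm1
      have l2 := Nat.lt_of_mul_lt_mul_left hm2
      omega
    rw [hq] at e
    exact pickA_inj (lt_of_lt_of_le hi (lenD hn hF d3'))
      (lt_of_lt_of_le hj (lenD hn hF d3')) e

lemma uS_inj {k l : ℕ} (hk : k < 2 * n + 1) (hl : l < 2 * n + 1)
    (h : uS F T n k = uS F T n l) : k = l := by
  have reg : ∀ m, m < 2 * n + 1 →
      m = 0 ∨ (∃ i, i < n ∧ m = i + 1) ∨ ∃ i, i < n ∧ m = n + 1 + i := by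
    intro m hm
    by_cases h0 : m = 0
    · exact Or.inl h0
    by_cases h1 : m ≤ n
    · exact Or.inr (Or.inl ⟨m - 1, by omega, by omega⟩)
    · exact Or.inr (Or.inr ⟨m - 1 - n, by omega, by omega⟩)
  rcases reg k hk with rfl | ⟨i, hi, rfl⟩ | ⟨i, hi, rfl⟩ <;>
    rcases reg l hl with rfl | ⟨j, hj, rfl⟩ | ⟨j, hj, rfl⟩
  · rfl
  · rw [uS_zero, uS_w F T hj] at h
    exact absurd h.symm (wS_ne_anchor hn hF hj)
  · rw [uS_zero, uS_z F T hj] at h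
    exact absurd h.symm (zS_ne_anchor hn hF hj)
  · rw [uS_zero, uS_w F T hi] at h
    exact absurd h (wS_ne_anchor hn hF hi)
  · rw [uS_w F T hi, uS_w F T hj] at h
    have := wS_inj hn hF hi hj h
    omega
  · rw [uS_w F T hi, uS_z F T hj] at h
    exact absurd h (wS_ne_zS hn hF hi hj)
  · rw [uS_z F T hi, uS_zero] at h
    exact absurd h (zS_ne_anchor hn hF hi)
  · rw [uS_z F T hi, uS_w F T hj] at h
    exact absurd h.symm (wS_ne_zS hn hF hj hi)
  · rw [uS_z F T hi, uS_z F T hj] at h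
    have := zS_inj hn hF hi hj h
    omega

include hn hF in
lemma decode {T' : ℕ → x} (hU : ∀ k, k < 2 * n + 1 → uS F T n k = uS F T' n k)
    {i : ℕ} (hi : i < n) : T i = T' i := by
  have h4 : 4 * n ≤ 2 * n * (n + 1) := arithE' hn hF
  have hw : ∀ j, j < n → wS F T n j = wS F T' n j := by
    intro j hj
    have := hU (j + 1) (by omega)
    rwa [uS_w F T hj, uS_w F T' hj] at this
  have hz : zS F T n i = zS F T' n i := by
    have := hU (n + 1 + i) (by omega)
    rwa [uS_z F T hi, uS_z F T' hi] at this
  rcases slot_cases (T := T) hi with hEi | ⟨g1, g2⟩ | ⟨d1, d2, d3⟩ <;>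
    rcases slot_cases (T := T') hi with hEj | ⟨g1', g2'⟩ | ⟨d1', d2', d3'⟩
  · -- E E
    rw [hEi, hEj]
  · -- E G
    exfalso
    rw [zS_eq_E hEi, zS_eq_G g1' g2'] at hz
    have he : F 0 ∈ VT T n := by rw [← hEi]; exact mem_VT hi
    obtain ⟨⟨ea, eb⟩, -⟩ := memE (T := T) hn hF hi he
    obtain ⟨⟨ga, gb⟩, -⟩ := memG (T := T') hn hF hi
    have := hF _ _ (by omega) (lt_of_lt_of_le gb (arithG' hn hF)) hz
    omega
  · -- E D
    exfalso
    rw [zS_eq_E hEi, zS_eq_D d1' d2'] at hz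
    have he : F 0 ∈ VT T n := by rw [← hEi]; exact mem_VT hi
    obtain ⟨⟨ea, eb⟩, -⟩ := memE (T := T) hn hF hi he
    obtain ⟨⟨da, db⟩, -⟩ := memD (T := T') hn hF hi d3'
    have hda : 4 * n ≤ pickA F (VT T' n) (4 * n + 2 * n * dd T' i) (2 * n) i :=
      le_trans (Nat.le_add_right _ _) da
    have := hF _ _ (by omega) (lt_of_lt_of_le db (arithD' hn hF d3')) hz
    omega
  · -- G E
    exfalso
    rw [zS_eq_G g1 g2, zS_eq_E hEj] at hz
    have he : F 0 ∈ VT T' n := by rw [← hEj]; exact mem_VT hi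
    obtain ⟨⟨ea, eb⟩, -⟩ := memE (T := T') hn hF hi he
    obtain ⟨⟨ga, gb⟩, -⟩ := memG (T := T) hn hF hi
    have := hF _ _ (lt_of_lt_of_le gb (arithG' hn hF)) (by omega) hz
    omega
  · -- G G
    have := hw i hi
    rwa [wS_eq_gen g1 g2, wS_eq_gen g1' g2'] at this
  · -- G D
    exfalso
    rw [zS_eq_G g1 g2, zS_eq_D d1' d2'] at hz
    obtain ⟨⟨ga, gb⟩, -⟩ := memG (T := T) hn hF hi
    obtain ⟨⟨da, db⟩, -⟩ := memD (T := T') hn hF hi d3'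
    have hda : 4 * n ≤ pickA F (VT T' n) (4 * n + 2 * n * dd T' i) (2 * n) i :=
      le_trans (Nat.le_add_right _ _) da
    have := hF _ _ (lt_of_lt_of_le gb (arithG' hn hF))
      (lt_of_lt_of_le db (arithD' hn hF d3')) hz
    omega
  · -- D E
    exfalso
    rw [zS_eq_D d1 d2, zS_eq_E hEj] at hz
    have he : F 0 ∈ VT T' n := by rw [← hEj]; exact mem_VT hi
    obtain ⟨⟨ea, eb⟩, -⟩ := memE (T := T') hn hF hi he
    obtain ⟨⟨da, db⟩, -⟩ := memD (T := T) hn hF hi d3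
    have hda : 4 * n ≤ pickA F (VT T n) (4 * n + 2 * n * dd T i) (2 * n) i :=
      le_trans (Nat.le_add_right _ _) da
    have := hF _ _ (lt_of_lt_of_le db (arithD' hn hF d3)) (by omega) hz
    omega
  · -- D G
    exfalso
    rw [zS_eq_D d1 d2, zS_eq_G g1' g2'] at hz
    obtain ⟨⟨ga, gb⟩, -⟩ := memG (T := T') hn hF hi
    obtain ⟨⟨da, db⟩, -⟩ := memD (T := T) hn hF hi d3
    have hda : 4 * n ≤ pickA F (VT T n) (4 * n + 2 * n * dd T i) (2 * n) i :=
      le_trans (Nat.le_add_right _ _) da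
    have := hF _ _ (lt_of_lt_of_le db (arithD' hn hF d3))
      (lt_of_lt_of_le gb (arithG' hn hF)) hz
    omega
  · -- D D
    rw [zS_eq_D d1 d2, zS_eq_D d1' d2'] at hz
    obtain ⟨⟨da, db⟩, -⟩ := memD (T := T) hn hF hi d3
    obtain ⟨⟨da', db'⟩, -⟩ := memD (T := T') hn hF hi d3'
    have e := hF _ _ (lt_of_lt_of_le db (arithD' hn hF d3))
      (lt_of_lt_of_le db' (arithD' hn hF d3')) hz
    have hq : dd T i = dd T' i := by
      rw [e] at da db
      have hm1 : 2 * n * dd T i < 2 * n * (dd T' i + 1) := by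
        rw [Nat.mul_succ]; omega
      have hm2 : 2 * n * dd T' i < 2 * n * (dd T i + 1) := by
        rw [Nat.mul_succ]; omega
      have l1 := Nat.lt_of_mul_lt_mul_left hm1
      have l2 := Nat.lt_of_mul_lt_mul_left hm2
      omega
    have hti : T (dd T i) = T i := dd_spec T i
    have hti' : T' (dd T' i) = T' i := dd_spec T' i
    have hg : T (dd T i) ≠ F 0 := by rw [hti]; exact d1
    have hqq : dd T (dd T i) = dd T i := dd_idem T i
    have hg' : T' (dd T' i) ≠ F 0 := by rw [hti']; exact d1'
    have hqq' : dd T' (dd T' i) = dd T' i := dd_idem T' i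
    have hwq := hw (dd T i) (by omega)
    rw [wS_eq_gen hg hqq, hq, wS_eq_gen hg' hqq'] at hwq
    calc T i = T (dd T i) := hti.symm
      _ = T (dd T' i) := by rw [hq]
      _ = T' (dd T' i) := hwq
      _ = T' i := hti'

end Main

section Perm

variable {F T : ℕ → x} {n : ℕ}
  [inst : DecidablePred (· ∈ Set.range fun k : Fin (2 * n + 1) => uS F T n k.val)]

/-- The permutation: a `2n+1`-cycle along the sequence `uS`. -/
noncomputable def permOf (hu : Function.Injective fun k : Fin (2 * n + 1) => uS F T n k.val) :
    Equiv.Perm x :=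
  (finRotate (2 * n + 1)).extendDomain (Equiv.ofInjective _ hu)

variable (hu : Function.Injective fun k : Fin (2 * n + 1) => uS F T n k.val)

lemma permOf_apply (k : Fin (2 * n + 1)) :
    permOf hu (uS F T n k.val) = uS F T n ((finRotate (2 * n + 1)) k).val := by
  have h := Equiv.Perm.extendDomain_apply_image (finRotate (2 * n + 1))
    (Equiv.ofInjective _ hu) k
  simpa [permOf, Equiv.ofInjective_apply] using h

lemma permOf_apply_not {z : x}
    (hz : z ∉ Set.range fun k : Fin (2 * n + 1) => uS F T n k.val) :
    permOf hu z = z :=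
  Equiv.Perm.extendDomain_apply_not_subtype _ _ hz

lemma permOf_moved (hn : 0 < n) :
    {z | permOf hu z ≠ z} = Set.range fun k : Fin (2 * n + 1) => uS F T n k.val := by
  ext z
  simp only [Set.mem_setOf_eq]
  constructor
  · intro hz
    by_contra hc
    exact hz (permOf_apply_not hu hc)
  · rintro ⟨k, rfl⟩
    rw [permOf_apply hu k]
    intro hc
    have h2 : (finRotate (2 * n + 1)) k = k := hu hc
    rw [finRotate_succ_apply] at h2
    have h3 := congrArg Fin.val h2
    rw [Fin.val_add_one] at h3
    split_ifs at h3 with hlast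
    · rw [hlast, Fin.val_last] at h3
      omega
    · omega

lemma permOf_pow (hn : 0 < n) : ∀ k : ℕ, k < 2 * n + 1 →
    (permOf hu ^ k) (F 0) = uS F T n k := by
  intro k
  induction k with
  | zero =>
    intro _
    rw [pow_zero, uS_zero]
    rfl
  | succ m ih =>
    intro hm
    rw [pow_succ', Equiv.Perm.mul_apply, ih (by omega)]
    have happ := permOf_apply hu (⟨m, by omega⟩ : Fin (2 * n + 1))
    rw [finRotate_succ_apply] at happ
    rw [happ]
    congr 1
    have hlt : (⟨m, by omega⟩ : Fin (2 * n + 1)) < Fin.last (2 * n) := by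
      rw [Fin.lt_def, Fin.val_last]
      show m < 2 * n
      omega
    rw [Fin.val_add_one_of_lt hlt]

end Perm

end PowersInjectAux

/-- For `n ≥ 1`, any set `x`, and any injection `f : 2n(n+1) → x`, one can construct an
injection from `xⁿ` into the set of permutations of `x` moving exactly `2n+1` elements. -/
theorem powers_inject_into_perms {x : Type*} (n : ℕ) (hn : 1 ≤ n)
    (f : Fin (2 * n * (n + 1)) → x) (hf : Function.Injective f) :
    ∃ g : (Fin n → x) → {p : Equiv.Perm x // {z | p z ≠ z}.ncard = 2 * n + 1},
      Function.Injective g := by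
  classical
  open PowersInjectAux in
  have hn0 : 0 < n := hn
  have hNpos : 0 < 2 * n * (n + 1) := by nlinarith
  set F : ℕ → x := fun k => f ⟨k % (2 * n * (n + 1)), Nat.mod_lt _ hNpos⟩ with hFdef
  have hF : ∀ a b, a < 2 * n * (n + 1) → b < 2 * n * (n + 1) → F a = F b → a = b := by
    intro a b ha hb h
    rw [hFdef] at h
    simp only at h
    have h2 := hf h
    rw [Fin.mk.injEq, Nat.mod_eq_of_lt ha, Nat.mod_eq_of_lt hb] at h2
    exact h2
  set T : (Fin n → x) → ℕ → x := fun t j => t ⟨j % n, Nat.mod_lt _ hn0⟩ with hTdef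
  have hT : ∀ (t : Fin n → x) (i : Fin n), T t i.val = t i := by
    intro t i
    rw [hTdef]
    simp only
    congr 1
    exact Fin.ext (Nat.mod_eq_of_lt i.isLt)
  have hu : ∀ t : Fin n → x,
      Function.Injective fun k : Fin (2 * n + 1) => uS F (T t) n k.val := by
    intro t k l h
    exact Fin.ext (uS_inj hn0 hF k.isLt l.isLt h)
  refine ⟨fun t => ⟨permOf (hu t), ?_⟩, ?_⟩
  · rw [permOf_moved (hu t) hn0]
    have hrange : Set.range (fun k : Fin (2 * n + 1) => uS F (T t) n k.val)
        = ↑(Finset.image (fun k : Fin (2 * n + 1) => uS F (T t) n k.val) Finset.univ) := by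
      rw [Finset.coe_image, Finset.coe_univ, Set.image_univ]
    rw [hrange, Set.ncard_coe_finset, Finset.card_image_of_injective _ (hu t),
      Finset.card_univ, Fintype.card_fin]
  · intro t t' hg
    have hp : permOf (hu t) = permOf (hu t') := congrArg Subtype.val hg
    have hU : ∀ k, k < 2 * n + 1 → uS F (T t) n k = uS F (T t') n k := by
      intro k hk
      rw [← permOf_pow (hu t) hn0 k hk, ← permOf_pow (hu t') hn0 k hk, hp]
    funext i
    have := decode hn0 hF hU i.isLt
    rw [hT t i, hT t' i] at this
    exact this
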